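/- Suppose p and q are even and positive, ε+η ≡ n+1 (mod 2), and u ≡ ε+1 (mod 2). Then the number of reduced solutions for the data (n,k,u,v,p,q,ε,η) equals the binomial coefficient C(k, p/2). -/

import Mathlib

/-- A *reduced solution* for the data `(n,k,u,v,p,q,ε,η)` (with `n = 2k+u+v`,
`p + q = 2k`): strictly decreasing positive integers `x_1 > … > x_q` and
`y_1 > … > y_p` whose underlying sets are disjoint with union `{u+v+1, …, n}`,
together with weakly decreasing nonnegative integers `b_1 ≥ … ≥ b_q ≥ 0`,
`a_1 ≥ … ≥ a_p ≥ 0` such that `x_i = (u+q+1−i) + η + 2b_i` and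
`y_m = (v+p−m) + ε + 2a_m` (written here with 0-based indices). -/
structure RedSol (n u v p q ε η : ℕ) where
  x : Fin q → ℤ
  y : Fin p → ℤ
  b : Fin q → ℤ
  a : Fin p → ℤ
  x_anti : StrictAnti x
  y_anti : StrictAnti y
  x_pos : ∀ i, 0 < x i
  y_pos : ∀ m, 0 < y m
  disj : Disjoint (Finset.univ.image x) (Finset.univ.image y)
  uni : Finset.univ.image x ∪ Finset.univ.image y =
    Finset.Icc ((u : ℤ) + v + 1) (n : ℤ)
  b_anti : Antitone b
  a_anti : Antitone a
  b_nonneg : ∀ i, 0 ≤ b i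
  a_nonneg : ∀ m, 0 ≤ a m
  hx : ∀ i : Fin q, x i = (u : ℤ) + q - i.1 + η + 2 * b i
  hy : ∀ m : Fin p, y m = (v : ℤ) + p - 1 - m.1 + ε + 2 * a m

namespace RedSol
variable {n u v p q ε η : ℕ}

lemma ext' {s t : RedSol n u v p q ε η} (h1 : s.x = t.x) (h2 : s.y = t.y)
    (h3 : s.b = t.b) (h4 : s.a = t.a) : s = t := by
  cases s; cases t; simp_all

lemma x_mem (s : RedSol n u v p q ε η) (i : Fin q) :
    s.x i ∈ Finset.Icc ((u : ℤ) + v + 1) (n : ℤ) := by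
  rw [← s.uni]
  exact Finset.mem_union_left _ (Finset.mem_image_of_mem _ (Finset.mem_univ i))

lemma y_mem (s : RedSol n u v p q ε η) (m : Fin p) :
    s.y m ∈ Finset.Icc ((u : ℤ) + v + 1) (n : ℤ) := by
  rw [← s.uni]
  exact Finset.mem_union_right _ (Finset.mem_image_of_mem _ (Finset.mem_univ m))

lemma x_le (s : RedSol n u v p q ε η) (i : Fin q) : s.x i ≤ n :=
  (Finset.mem_Icc.1 (s.x_mem i)).2

lemma x_ge (s : RedSol n u v p q ε η) (i : Fin q) : (u : ℤ) + v + 1 ≤ s.x i :=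
  (Finset.mem_Icc.1 (s.x_mem i)).1

lemma y_le (s : RedSol n u v p q ε η) (m : Fin p) : s.y m ≤ n :=
  (Finset.mem_Icc.1 (s.y_mem m)).2

lemma y_ge (s : RedSol n u v p q ε η) (m : Fin p) : (u : ℤ) + v + 1 ≤ s.y m :=
  (Finset.mem_Icc.1 (s.y_mem m)).1

lemma x_ne_y (s : RedSol n u v p q ε η) (i : Fin q) (m : Fin p) : s.x i ≠ s.y m := by
  intro h
  exact Finset.disjoint_left.1 s.disj
    (Finset.mem_image_of_mem _ (Finset.mem_univ i))
    (h ▸ Finset.mem_image_of_mem _ (Finset.mem_univ m))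

end RedSol

section EY

variable {m u v p q ε η : ℕ}

/-- if `m+2` is a `y`-value, it is `y 0`. -/
lemma y_top (s : RedSol (m+2) u v (p+2) q ε η)
    (hs : ((m:ℤ)+2) ∈ Finset.univ.image s.y) (j : Fin (p+2)) (hj : j.1 = 0) :
    s.y j = (m:ℤ)+2 := by
  obtain ⟨m0, -, hm0⟩ := Finset.mem_image.1 hs
  have h1 : s.y j ≤ ((m:ℤ)+2) := by have := s.y_le j; push_cast at this; omega
  have h2 : s.y m0 ≤ s.y j := s.y_anti.antitone (by rw [Fin.le_def]; omega)
  omega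

lemma y_snd (hpe : p % 2 = 0) (hqe : q % 2 = 0) (hpar : (u+v+1+ε+η) % 2 = 0)
    (huv : u + v ≤ m)
    (s : RedSol (m+2) u v (p+2) q ε η)
    (hs : ((m:ℤ)+2) ∈ Finset.univ.image s.y) (j : Fin (p+2)) (hj : j.1 = 1) :
    s.y j = (m:ℤ)+1 := by
  have hy0 : s.y ⟨0, by omega⟩ = (m:ℤ)+2 := y_top s hs _ rfl
  have hmem : ((m:ℤ)+1) ∈ Finset.univ.image s.x ∪ Finset.univ.image s.y := by
    rw [s.uni, Finset.mem_Icc]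
    push_cast
    omega
  have hmy : ((m:ℤ)+1) ∈ Finset.univ.image s.y := by
    rcases Finset.mem_union.1 hmem with h | h
    · exfalso
      obtain ⟨i, -, hi⟩ := Finset.mem_image.1 h
      by_cases hi1 : i.1 = 0
      · -- parity contradiction
        have e1 := s.hx i
        have e2 := s.hy ⟨0, by omega⟩
        rw [hi] at e1
        rw [hy0] at e2
        have hb := s.b_nonneg i
        have ha := s.a_nonneg ⟨0, by omega⟩
        simp only [Fin.val_mk] at e1 e2
        rw [hi1] at e1
        push_cast at e1 e2
        omega
      · have h0i : (⟨0, i.pos⟩ : Fin q) < i := by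
          rw [Fin.lt_def]; simp only [Fin.val_mk]; omega
        have hlt := s.x_anti h0i
        have hle := s.x_le ⟨0, i.pos⟩
        push_cast at hle
        have hx0 : s.x ⟨0, i.pos⟩ = (m:ℤ)+2 := by omega
        exact s.x_ne_y ⟨0, i.pos⟩ ⟨0, by omega⟩ (by rw [hx0, hy0])
    · exact h
  obtain ⟨m1, -, hm1⟩ := Finset.mem_image.1 hmy
  have hm10 : m1.1 ≠ 0 := by
    intro h0
    have := y_top s hs m1 h0
    omega
  have h2 : s.y m1 ≤ s.y j := s.y_anti.antitone (by rw [Fin.le_def]; omega)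
  have h3 : s.y j < s.y ⟨0, by omega⟩ :=
    s.y_anti (by rw [Fin.lt_def]; simp only [Fin.val_mk]; omega)
  omega


/-- Forward map: strip the top `YY` block. -/
def fwdY (hpe : p % 2 = 0) (hqe : q % 2 = 0) (hpar : (u+v+1+ε+η) % 2 = 0)
    (huv : u + v ≤ m)
    (s : RedSol (m+2) u v (p+2) q ε η)
    (hs : ((m:ℤ)+2) ∈ Finset.univ.image s.y) : RedSol m u v p q ε η where
  x := s.x
  y := fun j => s.y ⟨j.1+2, by omega⟩
  b := s.b
  a := fun j => s.a ⟨j.1+2, by omega⟩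
  x_anti := s.x_anti
  y_anti := fun j1 j2 h => s.y_anti (by
    have := Fin.lt_def.1 h
    rw [Fin.lt_def]; simp only [Fin.val_mk]; omega)
  x_pos := s.x_pos
  y_pos := fun j => s.y_pos _
  disj := by
    rw [Finset.disjoint_left]
    intro z hz hz'
    obtain ⟨j, -, hj⟩ := Finset.mem_image.1 hz'
    exact Finset.disjoint_left.1 s.disj hz
      (hj ▸ Finset.mem_image_of_mem _ (Finset.mem_univ _))
  uni := by
    ext z
    simp only [Finset.mem_union, Finset.mem_image, Finset.mem_univ, true_and,
      Finset.mem_Icc]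
    constructor
    · rintro (⟨i, rfl⟩ | ⟨j, rfl⟩)
      · have h1 := s.x_ge i
        have h2 := s.x_le i
        push_cast at h2
        have h3 : s.x i ≠ (m:ℤ)+2 := fun h =>
          s.x_ne_y i ⟨0, by omega⟩ (h.trans (y_top s hs ⟨0, by omega⟩ rfl).symm)
        have h4 : s.x i ≠ (m:ℤ)+1 := fun h =>
          s.x_ne_y i ⟨1, by omega⟩ (h.trans (y_snd hpe hqe hpar huv s hs ⟨1, by omega⟩ rfl).symm)
        omega
      · have h1 := s.y_ge ⟨j.1+2, by omega⟩
        have h2 : s.y ⟨j.1+2, by omega⟩ < s.y ⟨1, by omega⟩ :=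
          s.y_anti (by rw [Fin.lt_def]; simp only [Fin.val_mk]; omega)
        rw [y_snd hpe hqe hpar huv s hs ⟨1, by omega⟩ rfl] at h2
        omega
    · intro hz
      have hz' : z ∈ Finset.univ.image s.x ∪ Finset.univ.image s.y := by
        rw [s.uni, Finset.mem_Icc]; push_cast; omega
      rcases Finset.mem_union.1 hz' with h | h
      · obtain ⟨i, -, hi⟩ := Finset.mem_image.1 h
        exact Or.inl ⟨i, hi⟩
      · obtain ⟨j, -, hj⟩ := Finset.mem_image.1 h
        have hj0 : j.1 ≠ 0 := fun h0 => by
          rw [y_top s hs j h0] at hj; omega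
        have hj1 : j.1 ≠ 1 := fun h1 => by
          rw [y_snd hpe hqe hpar huv s hs j h1] at hj; omega
        refine Or.inr ⟨⟨j.1-2, by omega⟩, ?_⟩
        rw [← hj]
        congr 1
        rw [Fin.ext_iff]
        simp only [Fin.val_mk]
        omega
  b_anti := s.b_anti
  a_anti := fun j1 j2 h => s.a_anti (by
    have := Fin.le_def.1 h
    rw [Fin.le_def]; simp only [Fin.val_mk]; omega)
  b_nonneg := s.b_nonneg
  a_nonneg := fun j => s.a_nonneg _
  hx := s.hx
  hy := fun j => by
    have := s.hy ⟨j.1+2, by omega⟩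
    simp only [Fin.val_mk] at this
    push_cast at this ⊢
    omega
lemma a_le_A0 {m u v p q ε η : ℕ}
    (t : RedSol m u v p q ε η) (jj : Fin p) :
    t.a jj ≤ (((m+1-(v+p+ε))/2 : ℕ) : ℤ) := by
  have h1 : t.a jj ≤ t.a ⟨0, jj.pos⟩ :=
    t.a_anti (by rw [Fin.le_def]; simp only [Fin.val_mk]; omega)
  have h2 := t.hy ⟨0, jj.pos⟩
  have h3 := t.y_le ⟨0, jj.pos⟩
  simp only [Fin.val_mk] at h2
  push_cast at h2 h3 ⊢
  omega

/-- Backward map: add a top `YY` block. -/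
def bwdY (hA : (m+1+v+p+ε) % 2 = 0) (hA0 : v + p + ε ≤ m + 1) (huv : u + v ≤ m)
    (t : RedSol m u v p q ε η) : RedSol (m+2) u v (p+2) q ε η where
  x := t.x
  y := fun j => if h0 : j.1 = 0 then (m:ℤ)+2 else if h : j.1 = 1 then (m:ℤ)+1
    else t.y ⟨j.1-2, by omega⟩
  b := t.b
  a := fun j => if h0 : j.1 = 0 then (((m+1-(v+p+ε))/2 : ℕ) : ℤ)
    else if h : j.1 = 1 then (((m+1-(v+p+ε))/2 : ℕ) : ℤ)
    else t.a ⟨j.1-2, by omega⟩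
  x_anti := t.x_anti
  y_anti := by
    intro j1 j2 h
    have h12 := Fin.lt_def.1 h
    have hb1 : j2.1 < p + 2 := j2.2
    simp only []
    split_ifs <;>
      first
        | omega
        | (have := t.y_le ⟨j2.1-2, by omega⟩; omega)
        | (exact t.y_anti (by rw [Fin.lt_def]; simp only [Fin.val_mk]; omega))
  x_pos := t.x_pos
  y_pos := by
    intro j
    split_ifs
    · positivity
    · positivity
    · exact t.y_pos _
  disj := by
    rw [Finset.disjoint_left]
    intro z hz hz'
    obtain ⟨i, -, hi⟩ := Finset.mem_image.1 hz
    obtain ⟨j, -, hj⟩ := Finset.mem_image.1 hz'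
    have hxle := t.x_le i
    split_ifs at hj
    · omega
    · omega
    · exact absurd (hi.trans hj.symm) (t.x_ne_y i ⟨j.1-2, by omega⟩)
  uni := by
    ext z
    simp only [Finset.mem_union, Finset.mem_image, Finset.mem_univ, true_and,
      Finset.mem_Icc]
    constructor
    · rintro (⟨i, rfl⟩ | ⟨j, rfl⟩)
      · have h1 := t.x_ge i
        have h2 := t.x_le i
        push_cast
        omega
      · split_ifs
        · push_cast; omega
        · push_cast; omega
        · have h1 := t.y_ge ⟨j.1-2, by omega⟩
          have h2 := t.y_le ⟨j.1-2, by omega⟩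
          push_cast
          omega
    · intro hz
      push_cast at hz
      by_cases hc : z ≥ (m:ℤ)+1
      · refine Or.inr ?_
        by_cases hc2 : z = (m:ℤ)+2
        · refine ⟨⟨0, by omega⟩, ?_⟩
          simp only [Fin.val_mk]
          norm_num
          omega
        · refine ⟨⟨1, by omega⟩, ?_⟩
          simp only [Fin.val_mk]
          norm_num
          omega
      · have hz' : z ∈ Finset.univ.image t.x ∪ Finset.univ.image t.y := by
          rw [t.uni, Finset.mem_Icc]; omega
        rcases Finset.mem_union.1 hz' with h | h
        · obtain ⟨i, -, hi⟩ := Finset.mem_image.1 h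
          exact Or.inl ⟨i, hi⟩
        · obtain ⟨j, -, hj⟩ := Finset.mem_image.1 h
          refine Or.inr ⟨⟨j.1+2, by omega⟩, ?_⟩
          simp only [Fin.val_mk]
          rw [dif_neg (by omega), dif_neg (by omega)]
          have he : (⟨j.1+2-2, by omega⟩ : Fin p) = j :=
            Fin.ext (by simp only [Fin.val_mk]; omega)
          rw [he]
          exact hj
  b_anti := t.b_anti
  a_anti := by
    intro j1 j2 h
    have h12 := Fin.le_def.1 h
    have hb2 : j2.1 < p + 2 := j2.2
    simp only []
    split_ifs <;>
      first
        | exact le_refl _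
        | omega
        | (exact a_le_A0 t ⟨j2.1-2, by omega⟩)
        | (exact t.a_anti (by rw [Fin.le_def]; simp only [Fin.val_mk]; omega))
  b_nonneg := t.b_nonneg
  a_nonneg := by
    intro j
    split_ifs
    · positivity
    · positivity
    · exact t.a_nonneg _
  hx := t.hx
  hy := by
    intro j
    have hb2 : j.1 < p + 2 := j.2
    split_ifs with c1 c2
    · rw [c1]; push_cast; omega
    · rw [c2]; push_cast; omega
    · have := t.hy ⟨j.1-2, by omega⟩
      simp only [Fin.val_mk] at this
      push_cast at this ⊢
      omega
lemma EY (hpe : p % 2 = 0) (hqe : q % 2 = 0) (hpar : (u+v+1+ε+η) % 2 = 0)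
    (hA : (m+1+v+p+ε) % 2 = 0) (hA0 : v + p + ε ≤ m + 1) (huv : u + v ≤ m) :
    Nonempty ({s : RedSol (m+2) u v (p+2) q ε η //
        ((m:ℤ)+2) ∈ Finset.univ.image s.y} ≃ RedSol m u v p q ε η) := by
  refine ⟨⟨fun s => fwdY hpe hqe hpar huv s.1 s.2,
    fun t => ⟨bwdY hA hA0 huv t, ?_⟩, ?_, ?_⟩⟩
  · refine Finset.mem_image.2 ⟨⟨0, by omega⟩, Finset.mem_univ _, ?_⟩
    simp only [bwdY, Fin.val_mk]
    norm_num
  · rintro ⟨s, hs⟩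
    apply Subtype.ext
    refine RedSol.ext' rfl ?_ rfl ?_
    · funext j
      simp only [bwdY, fwdY]
      split_ifs with c0 c1
    
      · exact (y_top s hs j c0).symm
      · exact (y_snd hpe hqe hpar huv s hs j c1).symm
      · exact congrArg s.y (Fin.ext (by simp only [Fin.val_mk]; omega))
    · funext j
      simp only [bwdY, fwdY]
      split_ifs with c0 c1
      · have h1 := s.hy j
        have h2 := y_top s hs j c0
        rw [h2, c0] at h1
        push_cast at h1 ⊢
        omega
      · have h1 := s.hy j
        have h2 := y_snd hpe hqe hpar huv s hs j c1
        rw [h2, c1] at h1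
        push_cast at h1 ⊢
        omega
      · exact congrArg s.a (Fin.ext (by simp only [Fin.val_mk]; omega))
  · intro t
    refine RedSol.ext' rfl ?_ rfl ?_
    · funext j
      simp only [bwdY, fwdY, Fin.val_mk]
      rw [dif_neg (by omega), dif_neg (by omega)]
      congr 1
    · funext j
      simp only [bwdY, fwdY, Fin.val_mk]
      rw [dif_neg (by omega), dif_neg (by omega)]
      congr 1
end EY
section EX

variable {m u v p q ε η : ℕ}

lemma x_top (s : RedSol (m+2) u v p (q+2) ε η) (huv : u + v ≤ m)
    (hs : ((m:ℤ)+2) ∉ Finset.univ.image s.y) (j : Fin (q+2)) (hj : j.1 = 0) :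
    s.x j = (m:ℤ)+2 := by
  have hmem : ((m:ℤ)+2) ∈ Finset.univ.image s.x ∪ Finset.univ.image s.y := by
    rw [s.uni, Finset.mem_Icc]; push_cast; omega
  have hmx : ((m:ℤ)+2) ∈ Finset.univ.image s.x := by
    rcases Finset.mem_union.1 hmem with h | h
    · exact h
    · exact absurd h hs
  obtain ⟨i0, -, hi0⟩ := Finset.mem_image.1 hmx
  have h1 : s.x j ≤ ((m:ℤ)+2) := by have := s.x_le j; push_cast at this; omega
  have h2 : s.x i0 ≤ s.x j := s.x_anti.antitone (by rw [Fin.le_def]; omega)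
  omega

lemma x_snd (hpe : p % 2 = 0) (hqe : q % 2 = 0) (hpar : (u+v+1+ε+η) % 2 = 0)
    (huv : u + v ≤ m)
    (s : RedSol (m+2) u v p (q+2) ε η)
    (hs : ((m:ℤ)+2) ∉ Finset.univ.image s.y) (j : Fin (q+2)) (hj : j.1 = 1) :
    s.x j = (m:ℤ)+1 := by
  have hx0 : s.x ⟨0, by omega⟩ = (m:ℤ)+2 := x_top s huv hs _ rfl
  have hmem : ((m:ℤ)+1) ∈ Finset.univ.image s.x ∪ Finset.univ.image s.y := by
    rw [s.uni, Finset.mem_Icc]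
    push_cast
    omega
  have hmx : ((m:ℤ)+1) ∈ Finset.univ.image s.x := by
    rcases Finset.mem_union.1 hmem with h | h
    · exact h
    · exfalso
      obtain ⟨jm, -, hjm⟩ := Finset.mem_image.1 h
      by_cases hj1 : jm.1 = 0
      · -- parity contradiction
        have e1 := s.hx ⟨0, by omega⟩
        have e2 := s.hy jm
        rw [hjm] at e2
        rw [hx0] at e1
        have hb := s.b_nonneg ⟨0, by omega⟩
        have ha := s.a_nonneg jm
        simp only [Fin.val_mk] at e1 e2
        rw [hj1] at e2
        push_cast at e1 e2
        omega
      · have h0j : (⟨0, jm.pos⟩ : Fin p) < jm := by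
          rw [Fin.lt_def]; simp only [Fin.val_mk]; omega
        have hlt := s.y_anti h0j
        have hle := s.y_le ⟨0, jm.pos⟩
        push_cast at hle
        have hy0 : s.y ⟨0, jm.pos⟩ = (m:ℤ)+2 := by omega
        exact hs (hy0 ▸ Finset.mem_image_of_mem _ (Finset.mem_univ _))
  obtain ⟨i1, -, hi1⟩ := Finset.mem_image.1 hmx
  have hi10 : i1.1 ≠ 0 := by
    intro h0
    have := x_top s huv hs i1 h0
    omega
  have h2 : s.x i1 ≤ s.x j := s.x_anti.antitone (by rw [Fin.le_def]; omega)
  have h3 : s.x j < s.x ⟨0, by omega⟩ :=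
    s.x_anti (by rw [Fin.lt_def]; simp only [Fin.val_mk]; omega)
  omega

/-- Forward map: strip the top `XX` block. -/
def fwdX (hpe : p % 2 = 0) (hqe : q % 2 = 0) (hpar : (u+v+1+ε+η) % 2 = 0)
    (huv : u + v ≤ m)
    (s : RedSol (m+2) u v p (q+2) ε η)
    (hs : ((m:ℤ)+2) ∉ Finset.univ.image s.y) : RedSol m u v p q ε η where
  x := fun i => s.x ⟨i.1+2, by omega⟩
  y := s.y
  b := fun i => s.b ⟨i.1+2, by omega⟩
  a := s.a
  x_anti := fun i1 i2 h => s.x_anti (by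
    have := Fin.lt_def.1 h
    rw [Fin.lt_def]; simp only [Fin.val_mk]; omega)
  y_anti := s.y_anti
  x_pos := fun i => s.x_pos _
  y_pos := s.y_pos
  disj := by
    rw [Finset.disjoint_left]
    intro z hz hz'
    obtain ⟨i, -, hi⟩ := Finset.mem_image.1 hz
    exact Finset.disjoint_left.1 s.disj
      (hi ▸ Finset.mem_image_of_mem _ (Finset.mem_univ _)) hz'
  uni := by
    ext z
    simp only [Finset.mem_union, Finset.mem_image, Finset.mem_univ, true_and,
      Finset.mem_Icc]
    constructor
    · rintro (⟨i, rfl⟩ | ⟨j, rfl⟩)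
      · have h1 := s.x_ge ⟨i.1+2, by omega⟩
        have h2 : s.x ⟨i.1+2, by omega⟩ < s.x ⟨1, by omega⟩ :=
          s.x_anti (by rw [Fin.lt_def]; simp only [Fin.val_mk]; omega)
        rw [x_snd hpe hqe hpar huv s hs ⟨1, by omega⟩ rfl] at h2
        omega
      · have h1 := s.y_ge j
        have h2 := s.y_le j
        push_cast at h2
        have h3 : s.y j ≠ (m:ℤ)+2 := fun h =>
          hs (h ▸ Finset.mem_image_of_mem _ (Finset.mem_univ _))
        have h4 : s.y j ≠ (m:ℤ)+1 := fun h =>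
          s.x_ne_y ⟨1, by omega⟩ j ((x_snd hpe hqe hpar huv s hs ⟨1, by omega⟩ rfl).trans h.symm)
        omega
    · intro hz
      have hz' : z ∈ Finset.univ.image s.x ∪ Finset.univ.image s.y := by
        rw [s.uni, Finset.mem_Icc]; push_cast; omega
      rcases Finset.mem_union.1 hz' with h | h
      · obtain ⟨i, -, hi⟩ := Finset.mem_image.1 h
        have hi0 : i.1 ≠ 0 := fun h0 => by
          rw [x_top s huv hs i h0] at hi; omega
        have hi1 : i.1 ≠ 1 := fun h1 => by
          rw [x_snd hpe hqe hpar huv s hs i h1] at hi; omega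
        refine Or.inl ⟨⟨i.1-2, by omega⟩, ?_⟩
        rw [← hi]
        congr 1
        exact Fin.ext (by simp only [Fin.val_mk]; omega)
      · obtain ⟨j, -, hj⟩ := Finset.mem_image.1 h
        exact Or.inr ⟨j, hj⟩
  b_anti := fun i1 i2 h => s.b_anti (by
    have := Fin.le_def.1 h
    rw [Fin.le_def]; simp only [Fin.val_mk]; omega)
  a_anti := s.a_anti
  b_nonneg := fun i => s.b_nonneg _
  a_nonneg := s.a_nonneg
  hx := fun i => by
    have := s.hx ⟨i.1+2, by omega⟩
    simp only [Fin.val_mk] at this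
    push_cast at this ⊢
    omega
  hy := s.hy

lemma b_le_B0 {m u v p q ε η : ℕ}
    (t : RedSol m u v p q ε η) (ii : Fin q) :
    t.b ii ≤ (((m-(u+q+η))/2 : ℕ) : ℤ) := by
  have h1 : t.b ii ≤ t.b ⟨0, ii.pos⟩ :=
    t.b_anti (by rw [Fin.le_def]; simp only [Fin.val_mk]; omega)
  have h2 := t.hx ⟨0, ii.pos⟩
  have h3 := t.x_le ⟨0, ii.pos⟩
  simp only [Fin.val_mk] at h2
  push_cast at h2 h3 ⊢
  omega

/-- Backward map: add a top `XX` block. -/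
def bwdX (hB : (m+u+q+η) % 2 = 0) (hB0 : u + q + η ≤ m) (huv : u + v ≤ m)
    (t : RedSol m u v p q ε η) : RedSol (m+2) u v p (q+2) ε η where
  x := fun i => if h0 : i.1 = 0 then (m:ℤ)+2 else if h1 : i.1 = 1 then (m:ℤ)+1
    else t.x ⟨i.1-2, by omega⟩
  y := t.y
  b := fun i => if h0 : i.1 = 0 then (((m-(u+q+η))/2 : ℕ) : ℤ)
    else if h1 : i.1 = 1 then (((m-(u+q+η))/2 : ℕ) : ℤ)
    else t.b ⟨i.1-2, by omega⟩
  a := t.a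
  x_anti := by
    intro i1 i2 h
    have h12 := Fin.lt_def.1 h
    have hb1 : i2.1 < q + 2 := i2.2
    simp only []
    split_ifs <;>
      first
        | omega
        | (have := t.x_le ⟨i2.1-2, by omega⟩; omega)
        | (exact t.x_anti (by rw [Fin.lt_def]; simp only [Fin.val_mk]; omega))
  y_anti := t.y_anti
  x_pos := by
    intro i
    split_ifs
    · positivity
    · positivity
    · exact t.x_pos _
  y_pos := t.y_pos
  disj := by
    rw [Finset.disjoint_left]
    intro z hz hz'
    obtain ⟨i, -, hi⟩ := Finset.mem_image.1 hz
    obtain ⟨j, -, hj⟩ := Finset.mem_image.1 hz'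
    have hyle := t.y_le j
    split_ifs at hi
    · omega
    · omega
    · exact absurd (hi.trans hj.symm) (t.x_ne_y ⟨i.1-2, by omega⟩ j)
  uni := by
    ext z
    simp only [Finset.mem_union, Finset.mem_image, Finset.mem_univ, true_and,
      Finset.mem_Icc]
    constructor
    · rintro (⟨i, rfl⟩ | ⟨j, rfl⟩)
      · split_ifs
        · push_cast; omega
        · push_cast; omega
        · have h1 := t.x_ge ⟨i.1-2, by omega⟩
          have h2 := t.x_le ⟨i.1-2, by omega⟩
          push_cast
          omega
      · have h1 := t.y_ge j
        have h2 := t.y_le j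
        push_cast
        omega
    · intro hz
      push_cast at hz
      by_cases hc : z ≥ (m:ℤ)+1
      · refine Or.inl ?_
        by_cases hc2 : z = (m:ℤ)+2
        · refine ⟨⟨0, by omega⟩, ?_⟩
          simp only [Fin.val_mk]
          norm_num
          omega
        · refine ⟨⟨1, by omega⟩, ?_⟩
          simp only [Fin.val_mk]
          norm_num
          omega
      · have hz' : z ∈ Finset.univ.image t.x ∪ Finset.univ.image t.y := by
          rw [t.uni, Finset.mem_Icc]; omega
        rcases Finset.mem_union.1 hz' with h | h
        · obtain ⟨i, -, hi⟩ := Finset.mem_image.1 h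
          refine Or.inl ⟨⟨i.1+2, by omega⟩, ?_⟩
          simp only [Fin.val_mk]
          rw [dif_neg (by omega), dif_neg (by omega)]
          have he : (⟨i.1+2-2, by omega⟩ : Fin q) = i :=
            Fin.ext (by simp only [Fin.val_mk]; omega)
          rw [he]
          exact hi
        · obtain ⟨j, -, hj⟩ := Finset.mem_image.1 h
          exact Or.inr ⟨j, hj⟩
  b_anti := by
    intro i1 i2 h
    have h12 := Fin.le_def.1 h
    have hb2 : i2.1 < q + 2 := i2.2
    simp only []
    split_ifs <;>
      first
        | exact le_refl _
        | omega
        | (exact b_le_B0 t ⟨i2.1-2, by omega⟩)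
        | (exact t.b_anti (by rw [Fin.le_def]; simp only [Fin.val_mk]; omega))
  a_anti := t.a_anti
  b_nonneg := by
    intro i
    split_ifs
    · positivity
    · positivity
    · exact t.b_nonneg _
  a_nonneg := t.a_nonneg
  hx := by
    intro i
    have hb2 : i.1 < q + 2 := i.2
    split_ifs with c1 c2
    · rw [c1]; push_cast; omega
    · rw [c2]; push_cast; omega
    · have := t.hx ⟨i.1-2, by omega⟩
      simp only [Fin.val_mk] at this
      push_cast at this ⊢
      omega
  hy := t.hy

lemma EX (hpe : p % 2 = 0) (hqe : q % 2 = 0) (hpar : (u+v+1+ε+η) % 2 = 0)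
    (hB : (m+u+q+η) % 2 = 0) (hB0 : u + q + η ≤ m) (huv : u + v ≤ m) :
    Nonempty ({s : RedSol (m+2) u v p (q+2) ε η //
        ((m:ℤ)+2) ∉ Finset.univ.image s.y} ≃ RedSol m u v p q ε η) := by
  refine ⟨⟨fun s => fwdX hpe hqe hpar huv s.1 s.2,
    fun t => ⟨bwdX hB hB0 huv t, ?_⟩, ?_, ?_⟩⟩
  · -- m+2 not a y-value of bwdX t
    intro hmem
    obtain ⟨j, -, hj⟩ := Finset.mem_image.1 hmem
    have := t.y_le j
    simp only [bwdX] at hj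
    omega
  · rintro ⟨s, hs⟩
    apply Subtype.ext
    refine RedSol.ext' ?_ rfl ?_ rfl
    · funext i
      simp only [bwdX, fwdX]
      split_ifs with c0 c1
      · exact (x_top s huv hs i c0).symm
      · exact (x_snd hpe hqe hpar huv s hs i c1).symm
      · exact congrArg s.x (Fin.ext (by simp only [Fin.val_mk]; omega))
    · funext i
      simp only [bwdX, fwdX]
      split_ifs with c0 c1
      · have h1 := s.hx i
        have h2 := x_top s huv hs i c0
        rw [h2, c0] at h1
        push_cast at h1 ⊢
        omega
      · have h1 := s.hx i
        have h2 := x_snd hpe hqe hpar huv s hs i c1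
        rw [h2, c1] at h1
        push_cast at h1 ⊢
        omega
      · exact congrArg s.b (Fin.ext (by simp only [Fin.val_mk]; omega))
  · intro t
    refine RedSol.ext' ?_ rfl ?_ rfl
    · funext i
      simp only [bwdX, fwdX, Fin.val_mk]
      rw [dif_neg (by omega), dif_neg (by omega)]
      congr 1
    · funext i
      simp only [bwdX, fwdX, Fin.val_mk]
      rw [dif_neg (by omega), dif_neg (by omega)]
      congr 1

end EX

/-- base case: `p = q = 0`, `n = u + v`. -/
lemma base_equiv (u v ε η : ℕ) :
    Nonempty (RedSol (u + v) u v 0 0 ε η ≃ Fin 1) := by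
  have s0 : RedSol (u + v) u v 0 0 ε η :=
    { x := fun i => i.elim0
      y := fun i => i.elim0
      b := fun i => i.elim0
      a := fun i => i.elim0
      x_anti := fun i => i.elim0
      y_anti := fun i => i.elim0
      x_pos := fun i => i.elim0
      y_pos := fun i => i.elim0
      disj := by simp
      uni := by
        rw [Finset.Icc_eq_empty (by push_cast; omega)]
        simp
      b_anti := fun i => i.elim0
      a_anti := fun i => i.elim0
      b_nonneg := fun i => i.elim0
      a_nonneg := fun i => i.elim0
      hx := fun i => i.elim0
      hy := fun i => i.elim0 }
  refine ⟨⟨fun _ => 0, fun _ => s0, fun s => ?_, fun i => Subsingleton.elim _ _⟩⟩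
  exact RedSol.ext' (funext fun i => i.elim0) (funext fun i => i.elim0)
    (funext fun i => i.elim0) (funext fun i => i.elim0)
lemma master : ∀ k u v p q ε η : ℕ, p + q = 2*k → ε ≤ 1 → η ≤ 1 →
    p % 2 = 0 → q % 2 = 0 →
    (ε + η) % 2 = (2*k+u+v + 1) % 2 → u % 2 = (ε+1) % 2 →
    Nonempty (RedSol (2*k+u+v) u v p q ε η ≃ Fin (Nat.choose k (p/2))) := by
  intro k
  induction k with
  | zero =>
    intro u v p q ε η hpq hε hη hpe hqe hmod humod
    obtain rfl : p = 0 := by omega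
    obtain rfl : q = 0 := by omega
    have h1 : 2*0+u+v = u+v := by omega
    rw [h1]
    exact base_equiv u v ε η
  | succ k ih =>
    intro u v p q ε η hpq hε hη hpe hqe hmod humod
    have hpar : (u+v+1+ε+η) % 2 = 0 := by omega
    have hv : (v+η) % 2 = 0 := by omega
    have hueps : (u+1+ε) % 2 = 0 := by omega
    have hnn : 2*(k+1)+u+v = 2*k+u+v+2 := by ring
    rw [hnn]
    rcases Nat.eq_zero_or_pos p with rfl | hppos
    · -- p = 0 : all blocks are X
      obtain ⟨q', rfl⟩ : ∃ q', q = q'+2 := ⟨q-2, by omega⟩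
      have hq' : q' % 2 = 0 := by omega
      obtain ⟨eX⟩ := EX (m := 2*k+u+v) (u := u) (v := v) (p := 0) (q := q')
        (ε := ε) (η := η) rfl hq' hpar (by omega) (by omega) (by omega)
      obtain ⟨e2⟩ := ih u v 0 q' ε η (by omega) hε hη rfl hq' (by omega) humod
      have hall : ∀ s : RedSol (2*k+u+v+2) u v 0 (q'+2) ε η,
          (((2*k+u+v : ℕ):ℤ)+2) ∉ Finset.univ.image s.y := by
        intro s hmem
        obtain ⟨j, -, -⟩ := Finset.mem_image.1 hmem
        exact absurd j.2 (by omega)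
      refine ⟨((Equiv.subtypeUnivEquiv hall).symm.trans (eX.trans e2)).trans
        (finCongr ?_)⟩
      simp [Nat.choose_zero_right]
    rcases Nat.eq_zero_or_pos q with rfl | hqpos
    · -- q = 0 : all blocks are Y
      obtain ⟨p', rfl⟩ : ∃ p', p = p'+2 := ⟨p-2, by omega⟩
      have hp' : p' % 2 = 0 := by omega
      obtain ⟨eY⟩ := EY (m := 2*k+u+v) (u := u) (v := v) (p := p') (q := 0)
        (ε := ε) (η := η) hp' rfl hpar (by omega) (by omega) (by omega)
      obtain ⟨e2⟩ := ih u v p' 0 ε η (by omega) hε hη hp' rfl (by omega) humod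
      have hall : ∀ s : RedSol (2*k+u+v+2) u v (p'+2) 0 ε η,
          (((2*k+u+v : ℕ):ℤ)+2) ∈ Finset.univ.image s.y := by
        intro s
        have hmem : (((2*k+u+v : ℕ):ℤ)+2) ∈
            Finset.univ.image s.x ∪ Finset.univ.image s.y := by
          rw [s.uni, Finset.mem_Icc]; push_cast; omega
        rcases Finset.mem_union.1 hmem with h | h
        · obtain ⟨i, -, -⟩ := Finset.mem_image.1 h
          exact absurd i.2 (by omega)
        · exact h
      refine ⟨((Equiv.subtypeUnivEquiv fun s => hall s).symm.trans
        (eY.trans e2)).trans (finCongr ?_)⟩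
      have h1 : (p'+2)/2 = k+1 := by omega
      have h2 : p'/2 = k := by omega
      rw [h1, h2, Nat.choose_self, Nat.choose_self]
    -- general case
    obtain ⟨p', rfl⟩ : ∃ p', p = p'+2 := ⟨p-2, by omega⟩
    obtain ⟨q', rfl⟩ : ∃ q', q = q'+2 := ⟨q-2, by omega⟩
    have hp' : p' % 2 = 0 := by omega
    have hq' : q' % 2 = 0 := by omega
    obtain ⟨eY⟩ := EY (m := 2*k+u+v) (u := u) (v := v) (p := p') (q := q'+2)
      (ε := ε) (η := η) hp' (by omega) hpar (by omega) (by omega) (by omega)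
    obtain ⟨eX⟩ := EX (m := 2*k+u+v) (u := u) (v := v) (p := p'+2) (q := q')
      (ε := ε) (η := η) (by omega) hq' hpar (by omega) (by omega) (by omega)
    obtain ⟨e1⟩ := ih u v p' (q'+2) ε η (by omega) hε hη hp' (by omega)
      (by omega) humod
    obtain ⟨e2⟩ := ih u v (p'+2) q' ε η (by omega) hε hη (by omega) hq'
      (by omega) humod
    classical
    refine ⟨((((Equiv.sumCompl
        (fun s : RedSol (2*k+u+v+2) u v (p'+2) (q'+2) ε η =>
          (((2*k+u+v : ℕ):ℤ)+2) ∈ Finset.univ.image s.y)).symm.trans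
      (Equiv.sumCongr eY eX)).trans
      (Equiv.sumCongr e1 e2)).trans finSumFinEquiv).trans (finCongr ?_)⟩
    have h1 : (p'+2)/2 = p'/2 + 1 := by omega
    rw [h1, Nat.choose_succ_succ]


/-- Case 1 IIa of the main theorem for Sp(2n,ℝ): `p, q` even and positive,
`ε+η ≡ n+1 (mod 2)`, `u ≡ ε+1 (mod 2)`; the number of reduced solutions is `C(k, p/2)`. -/
theorem stmt9 (n k u v p q ε η : ℕ) (hk : 1 ≤ k) (hn : 2 * k + u + v = n)
    (hpq : p + q = 2 * k) (hε : ε ≤ 1) (hη : η ≤ 1)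
    (hpe : p % 2 = 0) (hqe : q % 2 = 0) (hppos : 0 < p) (hqpos : 0 < q)
    (hmod : (ε + η) % 2 = (n + 1) % 2) (humod : u % 2 = (ε + 1) % 2) :
    Nat.card (RedSol n u v p q ε η) = Nat.choose k (p / 2) := by
  subst hn
  obtain ⟨e⟩ := master k u v p q ε η hpq hε hη hpe hqe hmod humod
  exact Nat.card_eq_of_equiv_fin e
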